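/- Let m and n be positive integers and l : Fin n → ℤ a family of integers each coprime to m, and let ℤ/m act on S^{2n−1} coordinatewise by (a • z)_i = exp(2πi·l_i·a/m)·z_i. Then the quotient map S^{2n−1} → L(l_1,…,l_n) onto the orbit space, endowed with the quotient topology, is a covering map. -/

import Mathlib

open Complex Topology Set

private 
theorem covering_of_free_action {E X G : Type*} [TopologicalSpace E] [T2Space E]
    [TopologicalSpace X] [AddGroup G] [Finite G] [TopologicalSpace G] [DiscreteTopology G]
    (ρ : G → E → E) (hcont : ∀ g, Continuous (ρ g))
    (hmul : ∀ g h z, ρ g (ρ h z) = ρ (g + h) z)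
    (hzero : ∀ z : E, ρ 0 z = z)
    (hfree : ∀ g z, ρ g z = z → g = 0)
    (f : E → X) (hq : IsQuotientMap f)
    (horbit : ∀ z w, f z = f w ↔ ∃ g, ρ g z = w) :
    IsCoveringMap f := by
  -- uniqueness of translating element
  have huniq : ∀ (g g' : G) (z : E), ρ g z = ρ g' z → g = g' := by
    intro g g' z h
    have h1 : ρ (g - g') (ρ g' z) = ρ g' z := by rw [hmul, sub_add_cancel]; exact h
    exact sub_eq_zero.mp (hfree _ _ h1)
  -- preimage of image lemma
  have key : ∀ W : Set E, f ⁻¹' (f '' W) = ⋃ g, (ρ g) ⁻¹' W := by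
    intro W
    ext z
    simp only [mem_preimage, mem_image, mem_iUnion]
    constructor
    · rintro ⟨w, hw, hfw⟩
      obtain ⟨g, hg⟩ := (horbit w z).mp hfw
      exact ⟨-g, by rw [← hg, hmul, neg_add_cancel, hzero]; exact hw⟩
    · rintro ⟨g, hg⟩
      exact ⟨ρ g z, hg, ((horbit z (ρ g z)).mpr ⟨g, rfl⟩).symm⟩
  have hopen : ∀ W : Set E, IsOpen W → IsOpen (f '' W) := by
    intro W hW
    rw [← hq.isOpen_preimage, key]
    exact isOpen_iUnion fun g => hW.preimage (hcont g)
  intro x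
  obtain ⟨z₀, rfl⟩ := hq.surjective x
  -- separation
  have sep : ∀ g : G, g ≠ 0 → ∃ Vg Wg : Set E,
      IsOpen Vg ∧ IsOpen Wg ∧ z₀ ∈ Vg ∧ ρ g z₀ ∈ Wg ∧ Disjoint Vg Wg := by
    intro g hg
    have : z₀ ≠ ρ g z₀ := fun h => hg (hfree g z₀ h.symm)
    exact t2_separation this
  choose Vs Ws hVo hWo hzV hzW hdisj using sep
  set U : Set E := ⋂ g, ⋂ (hg : g ≠ 0), Vs g hg ∩ (ρ g) ⁻¹' (Ws g hg) with hUdef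
  have hUopen : IsOpen U :=
    isOpen_iInter_of_finite fun g => isOpen_iInter_of_finite fun hg =>
      (hVo g hg).inter ((hWo g hg).preimage (hcont g))
  have hz₀U : z₀ ∈ U := by
    simp only [hUdef, mem_iInter, mem_inter_iff, mem_preimage]
    exact fun g hg => ⟨hzV g hg, hzW g hg⟩
  have hU : ∀ (g : G) (z : E), z ∈ U → ρ g z ∈ U → g = 0 := by
    intro g z hz hgz
    by_contra hg
    have h1 : z ∈ Vs g hg ∩ (ρ g) ⁻¹' (Ws g hg) := by
      simp only [hUdef, mem_iInter] at hz; exact hz g hg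
    have h2 : ρ g z ∈ Vs g hg ∩ (ρ g) ⁻¹' (Ws g hg) := by
      simp only [hUdef, mem_iInter] at hgz; exact hgz g hg
    exact (hdisj g hg).ne_of_mem h2.1 h1.2 rfl
  -- definitions
  set T : Set E := ⋃ g, (ρ g) ⁻¹' U with hTdef
  set V : Set X := f '' U with hVdef
  have hTV : f ⁻¹' V = T := key U
  have hTopen : IsOpen T := isOpen_iUnion fun g => hUopen.preimage (hcont g)
  have hVopen : IsOpen V := hopen U hUopen
  have hexU : ∀ z ∈ T, ∃ g, ρ g z ∈ U := fun z hz => mem_iUnion.mp hz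
  classical
  set τ : E → G := fun z => if h : ∃ g, ρ g z ∈ U then h.choose else 0 with hτdef
  have hτ : ∀ (z : E) (h : ∃ g, ρ g z ∈ U), ρ (τ z) z ∈ U := by
    intro z h
    simp only [hτdef, dif_pos h]
    exact h.choose_spec
  have τunique : ∀ (z : E) (g : G), ρ g z ∈ U → τ z = g := by
    intro z g hg
    have h1 := hτ z ⟨g, hg⟩
    have h2 : ρ (g - τ z) (ρ (τ z) z) = ρ g z := by rw [hmul, sub_add_cancel]
    have h3 := hU (g - τ z) (ρ (τ z) z) h1 (h2 ▸ hg)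
    exact (sub_eq_zero.mp h3).symm
  set σ : X → E := fun x => if h : ∃ u, u ∈ U ∧ f u = x then h.choose else z₀ with hσdef
  have hσ : ∀ x ∈ V, σ x ∈ U ∧ f (σ x) = x := by
    intro x hx
    obtain ⟨u, hu, hfu⟩ := hx
    have h : ∃ u, u ∈ U ∧ f u = x := ⟨u, hu, hfu⟩
    simp only [hσdef, dif_pos h]
    exact h.choose_spec
  have σunique : ∀ u ∈ U, σ (f u) = u := by
    intro u hu
    have h := hσ (f u) ⟨u, hu, rfl⟩
    obtain ⟨g, hg⟩ := (horbit (σ (f u)) u).mp h.2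
    have h0 := hU g (σ (f u)) h.1 (by rw [hg]; exact hu)
    rw [h0, hzero] at hg
    exact hg
  -- continuity of τ on T
  have τcont : ∀ z ∈ T, ContinuousAt τ z := by
    intro z hz
    have h := hτ z (hexU z hz)
    have hnb : (ρ (τ z)) ⁻¹' U ∈ 𝓝 z := (hUopen.preimage (hcont (τ z))).mem_nhds h
    have heq : (fun _ => τ z) =ᶠ[𝓝 z] τ :=
      (Filter.eventually_of_mem hnb fun w hw => (τunique w (τ z) hw).symm :)
    exact continuousAt_const.congr heq
  -- continuity of σ on V
  have σcont : ∀ x ∈ V, ContinuousAt σ x := by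
    intro x hx
    rw [continuousAt_def]
    intro A hA
    obtain ⟨W, hWA, hWopen, hσW⟩ := mem_nhds_iff.mp hA
    have hmem : x ∈ f '' (W ∩ U) := ⟨σ x, ⟨hσW, (hσ x hx).1⟩, (hσ x hx).2⟩
    have hop : IsOpen (f '' (W ∩ U)) := hopen _ (hWopen.inter hUopen)
    refine Filter.mem_of_superset (hop.mem_nhds hmem) ?_
    rintro y ⟨u, hu, rfl⟩
    have h2 : σ (f u) = u := σunique u hu.2
    refine mem_preimage.mpr (hWA ?_)
    rw [h2]
    exact hu.1
  refine IsEvenlyCovered.to_isEvenlyCovered_preimage (I := G)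
    ((show (∃ t : Bundle.Trivialization G f, f z₀ ∈ t.baseSet) → _ from
      fun ⟨_, ht⟩ => IsEvenlyCovered.of_trivialization ht) ?_)
  refine ⟨{
    toFun := fun z => (f z, τ z)
    invFun := fun p => ρ (-p.2) (σ p.1)
    source := T
    target := V ×ˢ univ
    map_source' := fun z hz => ⟨by rw [← hTV] at hz; exact hz, mem_univ _⟩
    map_target' := by
      rintro ⟨x, g⟩ ⟨hx, -⟩
      have : ρ g (ρ (-g) (σ x)) = σ x := by rw [hmul, add_neg_cancel, hzero]
      exact mem_iUnion.mpr ⟨g, by rw [mem_preimage, this]; exact (hσ x hx).1⟩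
    left_inv' := by
      intro z hz
      have h1 := hτ z (hexU z hz)
      have hf : f (ρ (τ z) z) = f z := ((horbit z (ρ (τ z) z)).mpr ⟨τ z, rfl⟩).symm
      have hs : σ (f z) = ρ (τ z) z := by rw [← hf]; exact σunique _ h1
      show ρ (-(τ z)) (σ (f z)) = z
      rw [hs, hmul, neg_add_cancel, hzero]
    right_inv' := by
      rintro ⟨x, g⟩ ⟨hx, -⟩
      obtain ⟨hu, hfu⟩ := hσ x hx
      have h1 : f (ρ (-g) (σ x)) = x :=
        (((horbit (σ x) (ρ (-g) (σ x))).mpr ⟨-g, rfl⟩).symm).trans hfu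
      have h2 : ρ g (ρ (-g) (σ x)) = σ x := by rw [hmul, add_neg_cancel, hzero]
      have h3 : τ (ρ (-g) (σ x)) = g := τunique _ g (by rw [h2]; exact hu)
      exact Prod.ext h1 h3
    open_source := hTopen
    open_target := hVopen.prod isOpen_univ
    continuousOn_toFun := by
      apply ContinuousOn.prodMk hq.continuous.continuousOn
      exact fun z hz => (τcont z hz).continuousWithinAt
    continuousOn_invFun := by
      apply continuousOn_of_forall_continuousAt
      rintro ⟨x, g⟩ ⟨hx, -⟩
      have hnb : (univ ×ˢ {g} : Set (X × G)) ∈ 𝓝 (x, g) :=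
        (isOpen_univ.prod (isOpen_discrete _)).mem_nhds ⟨mem_univ _, rfl⟩
      have heq : (fun p : X × G => ρ (-g) (σ p.1)) =ᶠ[𝓝 (x, g)]
          (fun p : X × G => ρ (-p.2) (σ p.1)) := by
        refine Filter.eventually_of_mem hnb ?_
        rintro ⟨y, g'⟩ ⟨-, hg'⟩
        simp only [mem_singleton_iff] at hg'
        simp [hg']
      have hc : ContinuousAt (fun p : X × G => ρ (-g) (σ p.1)) (x, g) :=
        ((hcont (-g)).continuousAt).comp ((σcont x hx).comp_of_eq continuousAt_fst rfl)
      exact hc.congr heq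
    baseSet := V
    open_baseSet := hVopen
    source_eq := hTV.symm
    target_eq := rfl
    proj_toFun := fun z hz => rfl }, ?_⟩
  exact ⟨z₀, hz₀U, rfl⟩

/-- Let `ℤ/m` act on the unit sphere `S^{2n-1} ⊆ ℂⁿ` coordinatewise by
`(a • z) i = exp(2πi·lᵢ·a/m) · z i`, where the integers `lᵢ` are coprime to `m`.  The quotient
map from the sphere onto the lens space `L(l₁,…,lₙ)` (the orbit space, endowed with the
quotient topology) is a covering map. -/
theorem lens_space_quotient_is_covering_map (m n : ℕ) (hm : 0 < m) (hn : 0 < n)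
    (l : Fin n → ℤ) (hl : ∀ i, Int.gcd (l i) m = 1)
    (r : Metric.sphere (0 : EuclideanSpace ℂ (Fin n)) 1 →
      Metric.sphere (0 : EuclideanSpace ℂ (Fin n)) 1 → Prop)
    (hr : ∀ z w : Metric.sphere (0 : EuclideanSpace ℂ (Fin n)) 1,
      r z w ↔ ∃ a : ZMod m, ∀ i : Fin n,
        Complex.exp (2 * (Real.pi : ℂ) * Complex.I * (l i : ℂ) * (a.val : ℂ) / (m : ℂ))
            * (z : EuclideanSpace ℂ (Fin n)) i
          = (w : EuclideanSpace ℂ (Fin n)) i) :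
    IsCoveringMap (Quot.mk r) := by
  haveI : NeZero m := ⟨hm.ne'⟩
  letI : TopologicalSpace (ZMod m) := ⊥
  haveI : DiscreteTopology (ZMod m) := ⟨rfl⟩
  have hmC : (m:ℂ) ≠ 0 := Nat.cast_ne_zero.mpr (NeZero.ne m)
  set ee : Fin n → ZMod m → ℂ :=
    fun i a => Complex.exp (2 * (Real.pi : ℂ) * Complex.I * (l i : ℂ) * (a.val : ℂ) / (m : ℂ))
    with hee
  -- exp depends only on the residue
  have key : ∀ (i : Fin n) (k k' : ℕ), ((m:ℤ) ∣ (k:ℤ) - k') →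
      Complex.exp (2 * (Real.pi:ℂ) * I * (l i) * k / m)
        = Complex.exp (2 * (Real.pi:ℂ) * I * (l i) * k' / m) := by
    intro i k k' h
    obtain ⟨t, ht⟩ := h
    have hk : (k:ℂ) = k' + m * t := by
      have : (k:ℤ) = k' + m * t := by linarith
      exact_mod_cast congrArg (Int.cast : ℤ → ℂ) this
    rw [hk]
    have harg : 2 * (Real.pi:ℂ) * I * (l i) * ((k':ℂ) + m * t) / m
        = 2 * (Real.pi:ℂ) * I * (l i) * k' / m + ((l i * t : ℤ) : ℂ) * (2 * Real.pi * I) := by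
      push_cast
      field_simp
    rw [harg, Complex.exp_add, Complex.exp_int_mul_two_pi_mul_I, mul_one]
  have habs : ∀ (i : Fin n) (a : ZMod m), ‖ee i a‖ = 1 := by
    intro i a
    have harg : (2 * (Real.pi:ℂ) * I * (l i) * (a.val : ℂ) / m)
        = ((2 * Real.pi * (l i) * a.val / m : ℝ) : ℂ) * I := by push_cast; ring
    rw [hee]
    simp only
    rw [harg, Complex.norm_exp_ofReal_mul_I]
  have hadd : ∀ (i : Fin n) (a b : ZMod m), ee i (a + b) = ee i a * ee i b := by
    intro i a b
    have h1 : ee i (a + b)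
        = Complex.exp (2 * (Real.pi:ℂ) * I * (l i) * ((a.val + b.val : ℕ) : ℂ) / m) := by
      rw [hee]
      simp only
      apply key
      rw [ZMod.val_add]
      set k : ℤ := ((a.val + b.val : ℕ) : ℤ) with hkdef
      have : (((a.val + b.val) % m : ℕ) : ℤ) = k % m := by
        rw [hkdef]; exact_mod_cast Int.natCast_mod _ _
      rw [this]
      exact ⟨-(k / m), by rw [Int.emod_def]; ring⟩
    rw [h1, hee]
    simp only
    rw [← Complex.exp_add]
    congr 1
    push_cast
    field_simp
  have hzero' : ∀ i : Fin n, ee i 0 = 1 := by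
    intro i
    rw [hee]
    simp [ZMod.val_zero]
  -- the action on the sphere
  have hmem : ∀ (a : ZMod m) (z : Metric.sphere (0 : EuclideanSpace ℂ (Fin n)) 1),
      WithLp.toLp 2 (fun i => ee i a * (z : EuclideanSpace ℂ (Fin n)) i) ∈
        Metric.sphere (0 : EuclideanSpace ℂ (Fin n)) 1 := by
    intro a z
    refine mem_sphere_zero_iff_norm.mpr ?_
    have hz : ‖(z : EuclideanSpace ℂ (Fin n))‖ = 1 := mem_sphere_zero_iff_norm.mp z.2
    rw [EuclideanSpace.norm_eq] at hz ⊢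
    have hsum : ∑ i : Fin n, ‖ee i a * (z : EuclideanSpace ℂ (Fin n)) i‖ ^ 2
        = ∑ i : Fin n, ‖(z : EuclideanSpace ℂ (Fin n)) i‖ ^ 2 := by
      apply Finset.sum_congr rfl
      intro i _
      rw [norm_mul, habs, one_mul]
    rw [← hsum] at hz
    exact hz
  set ρ : ZMod m → Metric.sphere (0 : EuclideanSpace ℂ (Fin n)) 1 →
      Metric.sphere (0 : EuclideanSpace ℂ (Fin n)) 1 :=
    fun a z => ⟨WithLp.toLp 2 fun i => ee i a * (z : EuclideanSpace ℂ (Fin n)) i, hmem a z⟩ with hρ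
  have hcoord : ∀ (a : ZMod m) z (i : Fin n),
      ((ρ a z : Metric.sphere (0 : EuclideanSpace ℂ (Fin n)) 1) : EuclideanSpace ℂ (Fin n)) i
        = ee i a * (z : EuclideanSpace ℂ (Fin n)) i := fun a z i => rfl
  have hmulρ : ∀ (g h : ZMod m) z, ρ g (ρ h z) = ρ (g + h) z := by
    intro g h z
    apply Subtype.ext
    ext i
    rw [hcoord, hcoord, hcoord, hadd]
    ring
  have hzeroρ : ∀ z, ρ 0 z = z := by
    intro z
    apply Subtype.ext
    ext i
    rw [hcoord, hzero', one_mul]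
  have hfreeρ : ∀ (a : ZMod m) z, ρ a z = z → a = 0 := by
    intro a z h
    have hcoords : ∀ i, ee i a * (z : EuclideanSpace ℂ (Fin n)) i
        = (z : EuclideanSpace ℂ (Fin n)) i :=
      fun i => by rw [← hcoord a z i, h]
    have hznz : ∃ i, (z : EuclideanSpace ℂ (Fin n)) i ≠ 0 := by
      by_contra hc
      push_neg at hc
      have hz0 : (z : EuclideanSpace ℂ (Fin n)) = 0 := PiLp.ext hc
      have hz : ‖(z : EuclideanSpace ℂ (Fin n))‖ = 1 := mem_sphere_zero_iff_norm.mp z.2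
      rw [hz0] at hz
      simp at hz
    obtain ⟨i, hi⟩ := hznz
    have h1 : ee i a = 1 := by
      have h2 : ee i a * (z : EuclideanSpace ℂ (Fin n)) i
          = 1 * (z : EuclideanSpace ℂ (Fin n)) i := by rw [one_mul]; exact hcoords i
      exact mul_right_cancel₀ hi h2
    rw [hee] at h1
    simp only at h1
    obtain ⟨k, hk⟩ := Complex.exp_eq_one_iff.mp h1
    have h2 : (2*(Real.pi:ℂ)*I) * ((l i : ℂ) * a.val) = (2*(Real.pi:ℂ)*I) * ((k : ℂ) * m) := by
      have h2' := congrArg (fun x : ℂ => x * m) hk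
      simp only [div_mul_cancel₀ _ hmC] at h2'
      linear_combination h2'
    have h3 := mul_left_cancel₀ Complex.two_pi_I_ne_zero h2
    have h4 : (l i * a.val : ℤ) = k * m := by exact_mod_cast h3
    have h5 : (m:ℤ) ∣ (l i) * a.val := ⟨k, by linarith⟩
    have h6 : Int.gcd (m:ℤ) (l i) = 1 := by rw [Int.gcd_comm]; exact hl i
    have h7 : (m:ℤ) ∣ (a.val : ℤ) :=
      Int.dvd_of_dvd_mul_right_of_gcd_one h5 (by rw [Int.gcd_comm]; exact hl i)
    have h8 : m ∣ a.val := Int.natCast_dvd_natCast.mp h7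
    have h9 : a.val = 0 := Nat.eq_zero_of_dvd_of_lt h8 (ZMod.val_lt a)
    exact (ZMod.val_eq_zero a).mp h9
  have hcont : ∀ a : ZMod m, Continuous (ρ a) := by
    intro a
    refine Continuous.subtype_mk ?_ _
    refine (PiLp.continuous_toLp 2 _).comp ?_
    exact continuous_pi fun i =>
      continuous_const.mul ((continuous_apply i).comp ((PiLp.continuous_ofLp 2 _).comp continuous_subtype_val))
  have hiff : ∀ z w, r z w ↔ ∃ a : ZMod m, ρ a z = w := by
    intro z w
    rw [hr]
    apply exists_congr
    intro a
    rw [Subtype.ext_iff]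
    exact (funext_iff (f := fun i => ee i a * (z : EuclideanSpace ℂ (Fin n)) i)).symm.trans
      ((WithLp.ofLp_injective 2).eq_iff :
        WithLp.ofLp (ρ a z : EuclideanSpace ℂ (Fin n)) = WithLp.ofLp (w : EuclideanSpace ℂ (Fin n)) ↔ _)
  have requiv : Equivalence r := by
    constructor
    · intro z; exact (hiff z z).mpr ⟨0, hzeroρ z⟩
    · intro z w h
      obtain ⟨a, ha⟩ := (hiff z w).mp h
      refine (hiff w z).mpr ⟨-a, ?_⟩
      rw [← ha, hmulρ, neg_add_cancel, hzeroρ]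
    · intro z w v h h'
      obtain ⟨a, ha⟩ := (hiff z w).mp h
      obtain ⟨b, hb⟩ := (hiff w v).mp h'
      exact (hiff z v).mpr ⟨b + a, by rw [← hmulρ, ha, hb]⟩
  have horbit : ∀ z w, Quot.mk r z = Quot.mk r w ↔ ∃ a : ZMod m, ρ a z = w := by
    intro z w
    rw [Quot.eq, Equivalence.eqvGen_iff requiv, hiff]
  exact covering_of_free_action ρ hcont hmulρ hzeroρ hfreeρ _ isQuotientMap_quot_mk horbit
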